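/- Let F be an infinite field, K/F a finite field extension, ι a finite index type, and M ∈ Matrix ι ι K an invertible matrix. Then there exists an F-linear form ℓ : K → F such that the matrix ℓ(M) ∈ Matrix ι ι F, obtained by applying ℓ to each entry of M, is invertible. -/

import Mathlib

/-- for an invertible matrix M over a finite extension K of an
infinite field F, some F-linear form ℓ : K → F applied entrywise keeps M
invertible. -/
theorem exists_linearForm_map_isUnit
    (F K : Type*) [Field F] [Field K] [Algebra F K] [Infinite F]
    [FiniteDimensional F K]
    (ι : Type*) [Fintype ι] [DecidableEq ι]
    (M : Matrix ι ι K) (hM : IsUnit M) :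
    ∃ ℓ : K →ₗ[F] F, IsUnit (M.map ℓ) := by
  classical
  set n := Module.finrank F K with hn
  let b : Module.Basis (Fin n) F K := Module.finBasis F K
  -- polynomial matrix
  let N : Matrix ι ι (MvPolynomial (Fin n) F) :=
    fun i j => ∑ k, MvPolynomial.C (b.repr (M i j) k) * MvPolynomial.X k
  have hdetM : M.det ≠ 0 := by
    have := (Matrix.isUnit_iff_isUnit_det M).mp hM
    simpa [isUnit_iff_ne_zero] using this
  have haeval : (MvPolynomial.aeval (fun k => b k) : MvPolynomial (Fin n) F →ₐ[F] K)
      N.det = M.det := by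
    rw [AlgHom.map_det]
    congr 1
    ext i j
    simp only [AlgHom.mapMatrix_apply, Matrix.map_apply]
    simp only [N, map_sum, map_mul,
      MvPolynomial.aeval_C, MvPolynomial.aeval_X]
    have := b.sum_repr (M i j)
    simpa [Algebra.smul_def] using this
  have hP : N.det ≠ 0 := by
    intro h
    rw [h] at haeval
    simp at haeval
    exact hdetM haeval.symm
  obtain ⟨c, hc⟩ : ∃ c : Fin n → F, MvPolynomial.eval c N.det ≠ 0 := by
    by_contra h
    push_neg at h
    exact hP (MvPolynomial.funext (fun x => by simpa using h x))
  refine ⟨∑ k, c k • b.coord k, ?_⟩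
  have hmap : M.map (⇑(∑ k, c k • b.coord k)) = N.map (MvPolynomial.eval c) := by
    ext i j
    simp only [Matrix.map_apply]
    simp only [N, map_sum, map_mul, MvPolynomial.eval_C,
      MvPolynomial.eval_X, LinearMap.coe_sum, Finset.sum_apply, LinearMap.smul_apply,
      Module.Basis.coord_apply, smul_eq_mul]
    exact Finset.sum_congr rfl (fun k _ => mul_comm _ _)
  rw [Matrix.isUnit_iff_isUnit_det, hmap,
    show N.map ⇑(MvPolynomial.eval c) = (MvPolynomial.eval c : MvPolynomial (Fin n) F →+* F).mapMatrix N from rfl,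
    ← RingHom.map_det]
  simpa [isUnit_iff_ne_zero] using hc
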